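/- Let V be a positive definite form of degree 4 on ℝⁿ. Then every differentiable curve x : [0,∞) → ℝⁿ satisfying x'(t) = −∇V(x(t)) for all t ≥ 0 converges to the origin: x(t) → 0 as t → ∞. -/

import Mathlib

open MvPolynomial Filter

private lemma continuous_mveval {n : ℕ} (p : MvPolynomial (Fin n) ℝ) :
    Continuous fun y : Fin n → ℝ => eval y p := by
  induction p using MvPolynomial.induction_on with
  | C a => simpa using continuous_const
  | add p q hp hq => simpa [eval_add, Pi.add_def] using hp.add hq
  | mul_X p i hp => simpa [eval_mul, Pi.mul_def] using hp.mul (continuous_apply i)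

private lemma hasDerivAt_mveval {n : ℕ} (p : MvPolynomial (Fin n) ℝ)
    {x : ℝ → Fin n → ℝ} {v : Fin n → ℝ} {t : ℝ} (hx : HasDerivAt x v t) :
    HasDerivAt (fun s => eval (x s) p) (∑ i, eval (x t) (pderiv i p) * v i) t := by
  classical
  induction p using MvPolynomial.induction_on with
  | C a => simpa using hasDerivAt_const t (a : ℝ)
  | add p q hp hq =>
      have := hp.add hq
      simpa [eval_add, add_mul, Finset.sum_add_distrib, Pi.add_def] using this
  | mul_X p i hp =>
      have hxi : HasDerivAt (fun s => x s i) (v i) t := hasDerivAt_pi.1 hx i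
      have := hp.mul hxi
      have hres : (∑ j, eval (x t) (pderiv j (p * X i)) * v j)
          = (∑ j, eval (x t) (pderiv j p) * v j) * x t i + eval (x t) p * v i := by
        have key : ∀ j : Fin n, eval (x t) (pderiv j (p * X i)) * v j
            = eval (x t) (pderiv j p) * v j * x t i
              + eval (x t) p * (eval (x t) (pderiv j (X i)) * v j) := by
          intro j
          rw [pderiv_mul, eval_add, eval_mul, eval_mul, eval_X]
          ring
        rw [Finset.sum_congr rfl fun j _ => key j, Finset.sum_add_distrib,
          ← Finset.sum_mul, ← Finset.mul_sum]
        congr 1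
        rw [Finset.sum_eq_single i]
        · simp [pderiv_X_self]
        · intro j _ hj
          simp [pderiv_X_of_ne (Ne.symm hj)]
        · simp
      simpa [eval_mul, eval_X, hres.symm, Pi.mul_def] using this

private lemma eval_smul_of_isHomogeneous {n d : ℕ} {V : MvPolynomial (Fin n) ℝ}
    (h : V.IsHomogeneous d) (r : ℝ) (y : Fin n → ℝ) :
    eval (r • y) V = r ^ d * eval y V := by
  rw [eval_eq', eval_eq', Finset.mul_sum]
  refine Finset.sum_congr rfl fun c hc => ?_
  have hdeg : ∑ i, c i = d := by
    have h1 := h (mem_support_iff.1 hc)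
    rw [Finsupp.weight_apply] at h1
    rw [← h1, Finsupp.sum_fintype] <;> simp
  have : ∀ i : Fin n, (r • y) i ^ c i = r ^ c i * y i ^ c i := fun i => by
    simp [mul_pow]
  rw [Finset.prod_congr rfl fun i _ => this i, Finset.prod_mul_distrib,
    Finset.prod_pow_eq_pow_sum, hdeg]
  ring


/-- Let `V` be a positive definite quartic form on `ℝⁿ`. Then every
differentiable curve `x : [0, ∞) → ℝⁿ` satisfying `x'(t) = -∇V(x t)` for all `t ≥ 0` converges
to the origin as `t → ∞` (asymptotic stability of the cubic vector field `ẋ = -∇V(x)`). -/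
theorem gradient_flow_converges_of_positive_definite_quartic
    (n : ℕ) (V : MvPolynomial (Fin n) ℝ) (hVhom : V.IsHomogeneous 4)
    (hVpos : ∀ x : Fin n → ℝ, x ≠ 0 → 0 < eval x V) :
    ∀ x : ℝ → Fin n → ℝ,
      (∀ t : ℝ, 0 ≤ t → HasDerivAt x (fun i => -eval (x t) (pderiv i V)) t) →
      Tendsto x atTop (nhds 0) := by
  intro x hx
  rcases Nat.eq_zero_or_pos n with hn | hn
  · haveI : Subsingleton (Fin n → ℝ) := by
      subst hn; exact ⟨fun a b => funext fun i => i.elim0⟩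
    have hx0 : x = fun _ => 0 := funext fun t => Subsingleton.elim _ _
    rw [hx0]
    exact tendsto_const_nhds
  haveI : Nonempty (Fin n) := ⟨⟨0, hn⟩⟩
  -- basic facts about V
  have hV0 : eval (0 : Fin n → ℝ) V = 0 := by
    have := eval_smul_of_isHomogeneous hVhom 0 0
    simpa using this
  have hV0c : constantCoeff V = 0 := by simpa using hV0
  have hVnn : ∀ y : Fin n → ℝ, 0 ≤ eval y V := by
    intro y
    by_cases hy : y = 0
    · rw [hy, hV0]
    · exact (hVpos y hy).le
  -- Euler identity
  have euler : ∀ y : Fin n → ℝ, ∑ i, eval y (pderiv i V) * y i = 4 * eval y V := by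
    intro y
    have hc : HasDerivAt (fun lam : ℝ => lam • y) y 1 := by
      rw [hasDerivAt_pi]
      intro i
      simpa using (hasDerivAt_id (1 : ℝ)).mul_const (y i)
    have h1 := hasDerivAt_mveval V hc
    have h2 : HasDerivAt (fun lam : ℝ => eval (lam • y) V) (4 * eval y V) 1 := by
      have h3 : (fun lam : ℝ => eval (lam • y) V) = fun lam => lam ^ 4 * eval y V :=
        funext fun lam => by exact eval_smul_of_isHomogeneous hVhom lam y
      rw [h3]
      simpa using (hasDerivAt_pow 4 (1 : ℝ)).mul_const (eval y V)
    have := h1.unique h2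
    simpa [one_smul] using this
  have grad_ne : ∀ y : Fin n → ℝ, y ≠ 0 → ∃ i, eval y (pderiv i V) ≠ 0 := by
    intro y hy
    by_contra hgrad
    push_neg at hgrad
    have h0 := euler y
    rw [Finset.sum_eq_zero (fun i _ => by rw [hgrad i, zero_mul])] at h0
    have := hVpos y hy
    nlinarith
  -- minimum of V on the unit sphere
  obtain ⟨u0, hu0, hmin⟩ := (isCompact_sphere (0 : Fin n → ℝ) 1).exists_isMinOn
    (NormedSpace.sphere_nonempty.2 zero_le_one) (continuous_mveval V).continuousOn
  have hu0norm : ‖u0‖ = 1 := mem_sphere_zero_iff_norm.1 hu0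
  set m := eval u0 V with hm_def
  have hm : 0 < m := hVpos u0 (by
    intro h
    rw [h, norm_zero] at hu0norm
    norm_num at hu0norm)
  have hlow : ∀ y : Fin n → ℝ, m * ‖y‖ ^ 4 ≤ eval y V := by
    intro y
    by_cases hy : y = 0
    · simp [hy, hV0c]
    have hny : ‖y‖ ≠ 0 := norm_ne_zero_iff.2 hy
    have hu : ‖(‖y‖⁻¹ • y)‖ = 1 := by
      rw [norm_smul, norm_inv, norm_norm, inv_mul_cancel₀ hny]
    have h2 : m ≤ eval (‖y‖⁻¹ • y) V := hmin (mem_sphere_zero_iff_norm.2 hu)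
    have h3 : eval y V = ‖y‖ ^ 4 * eval (‖y‖⁻¹ • y) V := by
      conv_lhs => rw [← smul_inv_smul₀ hny y]
      exact eval_smul_of_isHomogeneous hVhom _ _
    rw [h3, mul_comm m]
    exact mul_le_mul_of_nonneg_left h2 (pow_nonneg (norm_nonneg y) 4)
  -- the Lyapunov function and dissipation
  set W : ℝ → ℝ := fun t => eval (x t) V with hW_def
  set g : (Fin n → ℝ) → ℝ := fun y => ∑ i, (eval y (pderiv i V)) ^ 2 with hg_def
  have hgnn : ∀ y, 0 ≤ g y := fun y =>
    Finset.sum_nonneg fun i _ => sq_nonneg _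
  have hgcont : Continuous g :=
    continuous_finset_sum _ fun i _ => (continuous_mveval (pderiv i V)).pow 2
  have hW' : ∀ t, 0 ≤ t → HasDerivAt W (-(g (x t))) t := by
    intro t ht
    have h1 := hasDerivAt_mveval V (hx t ht)
    have h2 : (∑ i, eval (x t) (pderiv i V) * (fun i => -eval (x t) (pderiv i V)) i)
        = -(g (x t)) := by
      rw [hg_def, ← Finset.sum_neg_distrib]
      exact Finset.sum_congr rfl fun i _ => by ring
    rwa [h2] at h1
  have hWcont : ContinuousOn W (Set.Ici (0 : ℝ)) := fun t ht =>
    ((hW' t ht).continuousAt).continuousWithinAt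
  have anti : ∀ δ : ℝ, 0 ≤ δ → (∀ t, 0 ≤ t → δ ≤ g (x t)) →
      AntitoneOn (fun t => W t + δ * t) (Set.Ici (0 : ℝ)) := by
    intro δ hδ hg
    have hd : ∀ t, 0 ≤ t → HasDerivAt (fun s => W s + δ * s) (-(g (x t)) + δ) t := by
      intro t ht
      simpa [Pi.add_def] using (hW' t ht).add ((hasDerivAt_id t).const_mul δ)
    apply antitoneOn_of_deriv_nonpos (convex_Ici 0)
    · exact hWcont.add (continuous_const.mul continuous_id).continuousOn
    · intro t ht
      rw [interior_Ici] at ht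
      exact ((hd t ht.le).differentiableAt).differentiableWithinAt
    · intro t ht
      rw [interior_Ici] at ht
      rw [(hd t ht.le).deriv]
      have := hg t ht.le
      linarith
  have hWanti : AntitoneOn W (Set.Ici (0 : ℝ)) := by
    have := anti 0 le_rfl fun t ht => hgnn _
    simpa using this
  have hWnn : ∀ t, 0 ≤ W t := fun t => hVnn _
  -- W tends to 0
  have hWlim : Tendsto W atTop (nhds 0) := by
    rw [tendsto_order]
    constructor
    · intro a ha
      exact Eventually.of_forall fun t => lt_of_lt_of_le ha (hWnn t)
    · intro a ha
      have hT : ∃ T, 0 ≤ T ∧ W T < a := by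
        by_contra hcon
        push_neg at hcon
        set K := {y : Fin n → ℝ | a ≤ eval y V ∧ eval y V ≤ W 0} with hK_def
        have hKclosed : IsClosed K :=
          (isClosed_le continuous_const (continuous_mveval V)).inter
            (isClosed_le (continuous_mveval V) continuous_const)
        have hKsub : K ⊆ Metric.closedBall 0 (max 1 (W 0 / m)) := by
          intro y hy
          rw [Metric.mem_closedBall, dist_zero_right]
          rcases le_or_gt ‖y‖ 1 with h1 | h1
          · exact le_trans h1 (le_max_left _ _)
          · refine le_trans ?_ (le_max_right _ _)
            have h4 : ‖y‖ ≤ ‖y‖ ^ 4 := le_self_pow₀ h1.le (by norm_num)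
            have h5 : m * ‖y‖ ^ 4 ≤ W 0 := le_trans (hlow y) hy.2
            rw [le_div_iff₀ hm]
            nlinarith
        have hKc : IsCompact K :=
          (isCompact_closedBall 0 _).of_isClosed_subset hKclosed hKsub
        have hKne : x 0 ∈ K := ⟨hcon 0 le_rfl, le_rfl⟩
        obtain ⟨z, hzK, hz⟩ := hKc.exists_isMinOn ⟨x 0, hKne⟩ hgcont.continuousOn
        have hzne : z ≠ 0 := by
          intro h
          have := hzK.1
          rw [h, hV0] at this
          linarith
        obtain ⟨i, hi⟩ := grad_ne z hzne
        have hδpos : 0 < g z := by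
          have h6 : (eval z (pderiv i V)) ^ 2 ≤ g z :=
            Finset.single_le_sum (f := fun i => (eval z (pderiv i V)) ^ 2)
              (fun j _ => sq_nonneg _) (Finset.mem_univ i)
          have h7 : 0 < (eval z (pderiv i V)) ^ 2 :=
            lt_of_le_of_ne (sq_nonneg _) (Ne.symm (pow_ne_zero 2 hi))
          linarith
        have hmem : ∀ t, 0 ≤ t → x t ∈ K := fun t ht =>
          ⟨hcon t ht, hWanti Set.self_mem_Ici (Set.mem_Ici.2 ht) ht⟩
        have hanti2 := anti (g z) hδpos.le fun t ht => hz (hmem t ht)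
        have hT0nn : (0 : ℝ) ≤ W 0 / g z + 1 := by
          have h0 : 0 ≤ W 0 / g z := div_nonneg (hWnn 0) hδpos.le
          linarith
        have h8 := hanti2 Set.self_mem_Ici (Set.mem_Ici.2 hT0nn) hT0nn
        simp only at h8
        have h9 : g z * (W 0 / g z + 1) = W 0 + g z := by
          field_simp
        have h10 := hWnn (W 0 / g z + 1)
        nlinarith
      obtain ⟨T, hT0, hTW⟩ := hT
      filter_upwards [eventually_ge_atTop T] with t ht
      exact lt_of_le_of_lt
        (hWanti (Set.mem_Ici.2 hT0) (Set.mem_Ici.2 (le_trans hT0 ht)) ht) hTW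
  -- conclude
  refine NormedAddCommGroup.tendsto_nhds_zero.2 fun ε hε => ?_
  have hev : ∀ᶠ t in atTop, W t < m * ε ^ 4 :=
    (tendsto_order.1 hWlim).2 _ (by positivity)
  filter_upwards [hev] with t ht
  have h1 : m * ‖x t‖ ^ 4 ≤ W t := hlow (x t)
  have h4 : ‖x t‖ ^ 4 < ε ^ 4 := by nlinarith
  exact lt_of_pow_lt_pow_left₀ 4 hε.le h4
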